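/- For every even integer k with k = 10 or k ≥ 16, there exist a prime p > k and an integer t such that, setting d = gcd(p − 1, k − 2) and m = (p − 1)/d, one has 0 < t < m, gcd(t, m) = 1, and both d·t + 2 < k and p + 1 − d·t < k. -/

import Mathlib

/-- Core construction: given a prime `p` with `k < p` and `6d + p ≤ 2k - 3`
where `d = gcd(p-1, k-2)`, there is a valid `t`. -/
lemma wr_core (k p : ℕ) (hk : Even k) (hk10 : 10 ≤ k) (hp : p.Prime) (hkp : k < p)
    (h6 : 6 * Nat.gcd (p - 1) (k - 2) + p ≤ 2 * k - 3) :
    ∃ t : ℕ, 0 < t ∧ t < (p - 1) / Nat.gcd (p - 1) (k - 2) ∧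
      Nat.gcd t ((p - 1) / Nat.gcd (p - 1) (k - 2)) = 1 ∧
      Nat.gcd (p - 1) (k - 2) * t + 2 < k ∧ p + 1 - Nat.gcd (p - 1) (k - 2) * t < k := by
  set d := Nat.gcd (p - 1) (k - 2) with hd
  have hpodd : p % 2 = 1 := Nat.odd_iff.mp (hp.odd_of_ne_two (by omega))
  have hkeven : k % 2 = 0 := Nat.even_iff.mp hk
  have h2p : 2 ∣ p - 1 := by omega
  have h2k : 2 ∣ k - 2 := by omega
  have h2d : 2 ∣ d := Nat.dvd_gcd h2p h2k
  have hdpos : 0 < d := Nat.gcd_pos_of_pos_right _ (by omega)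
  obtain ⟨m, hm⟩ : d ∣ p - 1 := Nat.gcd_dvd_left _ _
  obtain ⟨b, hb⟩ : d ∣ k - 2 := Nat.gcd_dvd_right _ _
  have hmd : (p - 1) / d = m := by rw [hm, Nat.mul_div_cancel_left _ hdpos]
  have hbm : b < m := by
    have h1 : d * b < d * m := by omega
    exact Nat.lt_of_mul_lt_mul_left h1
  have h2b : m + 6 ≤ 2 * b := by
    have h1 : d * (m + 6) ≤ d * (2 * b) := by
      have e1 : d * (m + 6) = d * m + 6 * d := by ring
      have e2 : d * (2 * b) = 2 * (d * b) := by ring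
      omega
    exact Nat.le_of_mul_le_mul_left h1 hdpos
  have hbig : m - b + 1 ≤ b - 1 → True := fun _ => trivial
  -- choose t
  have main : ∃ t : ℕ, m - b + 1 ≤ t ∧ t ≤ b - 1 ∧ Nat.gcd t m = 1 := by
    rcases Nat.even_or_odd m with hme | hmo
    · have hme' : m % 2 = 0 := Nat.even_iff.mp hme
      rcases Nat.even_or_odd (m / 2) with hhe | hho
      · -- m/2 even : t = m/2 - 1
        have hhe' : m / 2 % 2 = 0 := Nat.even_iff.mp hhe
        refine ⟨m / 2 - 1, by omega, by omega, ?_⟩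
        have htodd : (m / 2 - 1) % 2 = 1 := by omega
        have hg1 : Nat.gcd (m / 2 - 1) m ∣ m - 2 * (m / 2 - 1) :=
          Nat.dvd_sub (Nat.gcd_dvd_right _ _) ((Nat.gcd_dvd_left _ _).mul_left 2)
        have he : m - 2 * (m / 2 - 1) = 2 := by omega
        rw [he] at hg1
        rcases (Nat.dvd_prime Nat.prime_two).mp hg1 with h | h
        · exact h
        · exfalso
          have : Nat.gcd (m / 2 - 1) m ∣ m / 2 - 1 := Nat.gcd_dvd_left _ _
          rw [h] at this
          obtain ⟨c, hc⟩ := this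
          omega
      · -- m/2 odd : t = m/2 - 2
        have hho' : m / 2 % 2 = 1 := Nat.odd_iff.mp hho
        refine ⟨m / 2 - 2, by omega, by omega, ?_⟩
        have htodd : (m / 2 - 2) % 2 = 1 := by omega
        have hg1 : Nat.gcd (m / 2 - 2) m ∣ m - 2 * (m / 2 - 2) :=
          Nat.dvd_sub (Nat.gcd_dvd_right _ _) ((Nat.gcd_dvd_left _ _).mul_left 2)
        have he : m - 2 * (m / 2 - 2) = 4 := by omega
        rw [he] at hg1
        have hgt : Nat.gcd (m / 2 - 2) m ∣ m / 2 - 2 := Nat.gcd_dvd_left _ _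
        have hgpos : 0 < Nat.gcd (m / 2 - 2) m := Nat.gcd_pos_of_pos_right _ (by omega)
        have hgle : Nat.gcd (m / 2 - 2) m ≤ 4 := Nat.le_of_dvd (by norm_num) hg1
        set g := Nat.gcd (m / 2 - 2) m with hgdef
        obtain ⟨c, hc⟩ := hgt
        obtain ⟨c4, hc4⟩ := hg1
        interval_cases g <;> omega
    · -- m odd : t = m / 2
      have hmo' : m % 2 = 1 := Nat.odd_iff.mp hmo
      refine ⟨m / 2, by omega, by omega, ?_⟩
      have hg1 : Nat.gcd (m / 2) m ∣ m - 2 * (m / 2) :=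
        Nat.dvd_sub (Nat.gcd_dvd_right _ _) ((Nat.gcd_dvd_left _ _).mul_left 2)
      have he : m - 2 * (m / 2) = 1 := by omega
      rw [he] at hg1
      exact Nat.dvd_one.mp hg1
  obtain ⟨t, ht1, ht2, ht3⟩ := main
  have hX1 : d * t + d ≤ d * b := by
    calc d * t + d = d * (t + 1) := by ring
    _ ≤ d * b := Nat.mul_le_mul_left d (by omega)
  have hX2 : d * m + d ≤ d * t + d * b := by
    have h1 : d * (m - b + 1) ≤ d * t := Nat.mul_le_mul_left d ht1
    have e2 : d * (m - b + 1) + d * b = d * m + d := by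
      have e3 : m - b + 1 + b = m + 1 := by omega
      calc d * (m - b + 1) + d * b = d * (m - b + 1 + b) := by ring
      _ = d * (m + 1) := by rw [e3]
      _ = d * m + d := by ring
    omega
  refine ⟨t, by omega, by omega, by rw [hmd]; exact ht3, by omega, by omega⟩


/-- If `p = 2q+1` is a safe prime then `gcd(p-1, k-2) = 2` for even `k < p`,
so `p` witnesses the good-prime property whenever `p + 15 ≤ 2k`. -/
lemma wr_safe (k q p : ℕ) (hk : Even k) (hq : q.Prime) (hq2 : q ≠ 2) (hp : p.Prime)
    (hpq : p = 2 * q + 1) (hkp : k < p) (hpk : p + 15 ≤ 2 * k) :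
    6 * Nat.gcd (p - 1) (k - 2) + p ≤ 2 * k - 3 := by
  have hqodd : q % 2 = 1 := Nat.odd_iff.mp (hq.odd_of_ne_two hq2)
  have hkeven : k % 2 = 0 := Nat.even_iff.mp hk
  set d := Nat.gcd (p - 1) (k - 2) with hd
  have hk4 : 4 ≤ k := by omega
  have h2d : 2 ∣ d := Nat.dvd_gcd (by omega) (by omega)
  have hdk : d ∣ k - 2 := Nat.gcd_dvd_right _ _
  have hdle : d ≤ k - 2 := Nat.le_of_dvd (by omega) hdk
  have hdp : d ∣ 2 * q := by
    have : d ∣ p - 1 := Nat.gcd_dvd_left _ _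
    have he : p - 1 = 2 * q := by omega
    rwa [he] at this
  obtain ⟨e, he⟩ := h2d
  have hed : e ∣ q := by
    have h1 : 2 * e ∣ 2 * q := by rwa [he] at hdp
    exact (Nat.mul_dvd_mul_iff_left (by norm_num : 0 < 2)).mp h1
  rcases (Nat.Prime.eq_one_or_self_of_dvd hq e hed) with h1 | h1
  · -- e = 1, d = 2
    omega
  · -- e = q, d = 2q = p - 1, but d ≤ k - 2 < p - 1, contradiction
    exfalso
    omega

/-- Chain descent step, analogous to Mathlib's Bertrand descent. -/
lemma wr_chain_step (k : ℕ) (c : ℕ) (q p : ℕ) (hq : Nat.Prime q) (hq2 : q ≠ 2)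
    (hp : Nat.Prime p) (hpq : p = 2 * q + 1) (hcov : p + 15 ≤ 2 * c)
    (H : k < c → ∃ r, r.Prime ∧ k < r ∧ 6 * Nat.gcd (r - 1) (k - 2) + r ≤ 2 * k - 3)
    (hk : Even k) (hkp : k < p) :
    ∃ r, r.Prime ∧ k < r ∧ 6 * Nat.gcd (r - 1) (k - 2) + r ≤ 2 * k - 3 := by
  by_cases h : p + 15 ≤ 2 * k
  · exact ⟨p, hp, hkp, wr_safe k q p hk hq hq2 hp hpq hkp h⟩
  · exact H (by omega)


lemma wr_tau (M : ℕ) (hM : 0 < M) : M.divisors.card ≤ 2 * Nat.sqrt M := by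
  set s := Nat.sqrt M with hs
  have hsub : M.divisors ⊆ Finset.Icc 1 s ∪ (Finset.Icc 1 s).image (M / ·) := by
    intro x hx
    rw [Nat.mem_divisors] at hx
    obtain ⟨hdvd, hne⟩ := hx
    have hxpos : 0 < x := Nat.pos_of_dvd_of_pos hdvd hM
    by_cases hxs : x ≤ s
    · exact Finset.mem_union_left _ (Finset.mem_Icc.mpr ⟨hxpos, hxs⟩)
    · apply Finset.mem_union_right
      rw [Finset.mem_image]
      refine ⟨M / x, Finset.mem_Icc.mpr ⟨?_, ?_⟩, ?_⟩
      · exact Nat.one_le_div_iff hxpos |>.mpr (Nat.le_of_dvd hM hdvd)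
      · -- M / x ≤ s since x ≥ s + 1
        have h1 : M / x ≤ M / (s + 1) := Nat.div_le_div_left (by omega) (by omega)
        have h2 : M / (s + 1) < s + 1 := by
          rw [Nat.div_lt_iff_lt_mul (by omega)]
          have := Nat.lt_succ_sqrt' M
          calc M < (s + 1) ^ 2 := this
          _ = (s + 1) * (s + 1) := sq (s+1) ▸ by ring
        omega
      · exact Nat.div_div_self hdvd (by omega)
  calc M.divisors.card ≤ (Finset.Icc 1 s ∪ (Finset.Icc 1 s).image (M / ·)).card :=
        Finset.card_le_card hsub
  _ ≤ (Finset.Icc 1 s).card + ((Finset.Icc 1 s).image (M / ·)).card := Finset.card_union_le _ _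
  _ ≤ (Finset.Icc 1 s).card + (Finset.Icc 1 s).card :=
        Nat.add_le_add_left (Finset.card_image_le) _
  _ = 2 * s := by rw [Nat.card_Icc]; omega


/-- The numeric inequality contradicting existence of no good prime, for `n ≥ 2^20`. -/
lemma wr_main_ineq (n : ℕ) (hn : 1048576 ≤ n) :
    n * ((2 * n) ^ Nat.sqrt (2 * n) * 4 ^ (2 * n / 3) * (2 * n) ^ (10 * Nat.sqrt n + 2))
      ≤ 4 ^ n := by
  set y := n / 1024 with hy
  have hy512 : 1024 ≤ y := by omega
  have hylb : 1024 * y ≤ n := by omega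
  have hyub : n ≤ 1024 * y + 1023 := by omega
  have hb := bertrand_main_inequality (n := y) (by omega)
  set s2 := Nat.sqrt (2 * y) with hs2
  -- (2y)^s2 ≤ 4^(y/3+1)
  have hkey : (2 * y) ^ s2 ≤ 4 ^ (y / 3 + 1) := by
    have h1 : (4:ℕ) ^ y ≤ 4 ^ (y / 3 + 1) * 4 ^ (2 * y / 3) := by
      rw [← pow_add]
      exact Nat.pow_le_pow_right (by norm_num) (by omega)
    have h2 : (2 * y) ^ s2 * 4 ^ (2 * y / 3) ≤ 4 ^ (y / 3 + 1) * 4 ^ (2 * y / 3) := by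
      calc (2 * y) ^ s2 * 4 ^ (2 * y / 3)
          ≤ y * ((2 * y) ^ s2 * 4 ^ (2 * y / 3)) := Nat.le_mul_of_pos_left _ (by omega)
      _ = y * (2 * y) ^ s2 * 4 ^ (2 * y / 3) := by ring
      _ ≤ 4 ^ y := hb
      _ ≤ 4 ^ (y / 3 + 1) * 4 ^ (2 * y / 3) := h1
    exact Nat.le_of_mul_le_mul_right h2 (by positivity)
  have hA' : 2 * y < (s2 + 1) * (s2 + 1) := by
    have hA : 2 * y < (s2 + 1) ^ 2 := Nat.lt_succ_sqrt' (2 * y)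
    nlinarith [hA]
  have hs2ge : 45 ≤ s2 := Nat.le_sqrt.mpr (by omega)
  -- sqrt(2n) ≤ 46*(s2+1)
  have hs1 : Nat.sqrt (2 * n) ≤ 46 * (s2 + 1) := by
    have h1 : 2 * n < (46 * (s2 + 1)) ^ 2 := by nlinarith [hA', hyub]
    have := Nat.sqrt_lt'.mpr h1
    omega
  -- sqrt(n) ≤ 32*(s2+1)
  have hsn : Nat.sqrt n ≤ 32 * (s2 + 1) := by
    have h1 : n < (32 * (s2 + 1)) ^ 2 := by nlinarith [hA', hyub]
    have := Nat.sqrt_lt'.mpr h1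
    omega
  -- total exponent bound
  have hE : 2 * (Nat.sqrt (2 * n) + (10 * Nat.sqrt n + 2)) ≤ s2 * 750 := by omega
  -- 2n ≤ (2y)^2
  have h2n : 2 * n ≤ (2 * y) * (2 * y) := by nlinarith [hy512, hyub]
  -- n ≤ 4^(y+5)
  have hn4 : n ≤ 4 ^ (y + 5) := by
    have h1 : y < 4 ^ y := Nat.lt_pow_self (n := y) (by norm_num)
    have h2 : (4:ℕ) ^ (y + 5) = 1024 * 4 ^ y := by rw [pow_add]; ring
    omega
  have hcomb : (2 * n) ^ Nat.sqrt (2 * n) * (2 * n) ^ (10 * Nat.sqrt n + 2)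
      ≤ 4 ^ ((y / 3 + 1) * 750) := by
    rw [← pow_add]
    calc (2 * n) ^ (Nat.sqrt (2 * n) + (10 * Nat.sqrt n + 2))
        ≤ ((2 * y) * (2 * y)) ^ (Nat.sqrt (2 * n) + (10 * Nat.sqrt n + 2)) :=
          Nat.pow_le_pow_left h2n _
    _ = (2 * y) ^ (2 * (Nat.sqrt (2 * n) + (10 * Nat.sqrt n + 2))) := by
          rw [show (2*y)*(2*y) = (2*y)^2 by ring, ← pow_mul]
    _ ≤ (2 * y) ^ (s2 * 750) := Nat.pow_le_pow_right (by omega) hE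
    _ = ((2 * y) ^ s2) ^ 750 := pow_mul _ _ _
    _ ≤ (4 ^ (y / 3 + 1)) ^ 750 := Nat.pow_le_pow_left hkey _
    _ = 4 ^ ((y / 3 + 1) * 750) := (pow_mul _ _ _).symm
  calc n * ((2 * n) ^ Nat.sqrt (2 * n) * 4 ^ (2 * n / 3) * (2 * n) ^ (10 * Nat.sqrt n + 2))
      = n * ((2 * n) ^ Nat.sqrt (2 * n) * (2 * n) ^ (10 * Nat.sqrt n + 2)) * 4 ^ (2 * n / 3) := by
        ring
  _ ≤ 4 ^ (y + 5) * 4 ^ ((y / 3 + 1) * 750) * 4 ^ (2 * n / 3) :=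
        Nat.mul_le_mul (Nat.mul_le_mul hn4 hcomb) (le_refl _)
  _ = 4 ^ ((y + 5) + (y / 3 + 1) * 750 + 2 * n / 3) := by rw [← pow_add, ← pow_add]
  _ ≤ 4 ^ n := Nat.pow_le_pow_right (by norm_num) (by omega)

open Nat in
lemma wr_analytic (n : ℕ) (hn : Even n) (h20 : 1048576 ≤ n) :
    ∃ p, p.Prime ∧ n < p ∧ 6 * Nat.gcd (p - 1) (n - 2) + p ≤ 2 * n - 3 := by
  by_contra no_good
  push_neg at no_good
  have n_pos : 0 < n := by omega
  have n_large : 2 < n := by omega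
  -- Part 1: the product over small primes (as in Mathlib's Bertrand proof)
  have bound_small : (∏ x ∈ Finset.range (2 * n / 3 + 1),
      x ^ (centralBinom n).factorization x) ≤ (2 * n) ^ Nat.sqrt (2 * n) * 4 ^ (2 * n / 3) := by
    have n2_pos : 1 ≤ 2 * n := by omega
    let S := (Finset.range (2 * n / 3 + 1)).filter Nat.Prime
    let f := fun x => x ^ (centralBinom n).factorization x
    have hSf : ∏ x ∈ S, f x = ∏ x ∈ Finset.range (2 * n / 3 + 1), f x := by
      refine Finset.prod_filter_of_ne fun p _ h => ?_
      contrapose! h; dsimp only [f]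
      rw [factorization_eq_zero_of_not_prime n.centralBinom h, _root_.pow_zero]
    rw [← hSf, ← Finset.prod_filter_mul_prod_filter_not S (· ≤ Nat.sqrt (2 * n))]
    apply mul_le_mul'
    · refine (Finset.prod_le_prod' fun p _ => (?_ : f p ≤ 2 * n)).trans ?_
      · exact pow_factorization_choose_le (by omega)
      have hcard : (Finset.Icc 1 (Nat.sqrt (2 * n))).card = Nat.sqrt (2 * n) := by
        rw [Nat.card_Icc, Nat.add_sub_cancel]
      rw [Finset.prod_const]
      refine pow_right_mono₀ n2_pos ((Finset.card_le_card fun x hx => ?_).trans hcard.le)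
      obtain ⟨h1, h2⟩ := Finset.mem_filter.1 hx
      exact Finset.mem_Icc.mpr ⟨(Finset.mem_filter.1 h1).2.one_lt.le, h2⟩
    · refine le_trans ?_ (primorial_le_4_pow (2 * n / 3))
      refine (Finset.prod_le_prod' fun p hp => (?_ : f p ≤ p)).trans ?_
      · obtain ⟨h1, h2⟩ := Finset.mem_filter.1 hp
        refine (pow_right_mono₀ (Finset.mem_filter.1 h1).2.one_lt.le ?_).trans (pow_one p).le
        exact Nat.factorization_choose_le_one (Nat.sqrt_lt'.mp <| not_le.1 h2)
      refine Finset.prod_le_prod_of_subset_of_one_le' (Finset.filter_subset _ _) ?_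
      exact fun p hp _ => (Finset.mem_filter.1 hp).2.one_lt.le
  -- Part 2: the product over the large range is controlled by bad primes
  set F := (Finset.Ico (2 * n / 3 + 1) (2 * n + 1)).filter (fun x => x.Prime ∧ n < x) with hF
  have hIco : (∏ x ∈ Finset.Ico (2 * n / 3 + 1) (2 * n + 1),
      x ^ (centralBinom n).factorization x) = ∏ x ∈ F, x ^ (centralBinom n).factorization x := by
    rw [hF]
    refine (Finset.prod_filter_of_ne fun p hp h => ?_).symm
    rw [Finset.mem_Ico] at hp
    by_cases hprime : p.Prime
    · refine ⟨hprime, ?_⟩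
      by_contra hle
      push_neg at hle
      rw [factorization_centralBinom_of_two_mul_self_lt_three_mul n_large hle (by omega),
        _root_.pow_zero] at h
      exact h rfl
    · rw [factorization_eq_zero_of_not_prime n.centralBinom hprime, _root_.pow_zero] at h
      exact absurd rfl h
  have hsubset : F ⊆ (((n - 2).divisors ×ˢ Finset.Icc 1 5).image
      (fun q : ℕ × ℕ => 2 * n - 3 - q.2 * q.1)) ∪ {2 * n - 3, 2 * n - 1} := by
    intro p hp
    rw [hF, Finset.mem_filter, Finset.mem_Ico] at hp
    obtain ⟨⟨hlo, hhi⟩, hprime, hnp⟩ := hp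
    have hodd : p % 2 = 1 := Nat.odd_iff.mp (hprime.odd_of_ne_two (by omega))
    by_cases hbig : 2 * n - 4 ≤ p
    · -- p ∈ {2n-3, 2n-1}
      have : p = 2 * n - 3 ∨ p = 2 * n - 1 := by omega
      apply Finset.mem_union_right
      rcases this with h | h <;> simp [h]
    · -- p ≤ 2n-5 : bad prime of the form 2n-3-c*d
      push_neg at hbig
      set d := Nat.gcd (p - 1) (n - 2) with hd
      have hdpos : 0 < d := Nat.gcd_pos_of_pos_right _ (by omega)
      have hd1 : d ∣ n - 2 := Nat.gcd_dvd_right _ _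
      have hdp1 : d ∣ p - 1 := Nat.gcd_dvd_left _ _
      have hdpn : d ∣ p + 1 - n := by
        have h1 := Nat.dvd_sub hdp1 hd1
        have he : p - 1 - (n - 2) = p + 1 - n := by omega
        rwa [he] at h1
      have hde : d ∣ 2 * n - 3 - p := by
        have h1 := Nat.dvd_sub hd1 hdpn
        have he : n - 2 - (p + 1 - n) = 2 * n - 3 - p := by omega
        rwa [he] at h1
      have hng := no_good p hprime hnp
      have hlt : 2 * n - 3 - p < 6 * d := by omega
      obtain ⟨c, hc⟩ := hde
      have hcomm : c * d = d * c := Nat.mul_comm c d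
      have hc1 : 1 ≤ c := by
        rcases Nat.eq_zero_or_pos c with h | h
        · exfalso; rw [h, Nat.mul_zero] at hc; omega
        · exact h
      have hc5 : c ≤ 5 := by nlinarith [hc, hlt, hdpos]
      apply Finset.mem_union_left
      rw [Finset.mem_image]
      refine ⟨(d, c), ?_, ?_⟩
      · rw [Finset.mem_product]
        exact ⟨Nat.mem_divisors.mpr ⟨hd1, by omega⟩, Finset.mem_Icc.mpr ⟨hc1, hc5⟩⟩
      · simp only
        omega
  have hcardF : F.card ≤ 10 * Nat.sqrt n + 2 := by
    have h1 := Finset.card_le_card hsubset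
    have h2 := Finset.card_union_le
      (((n - 2).divisors ×ˢ Finset.Icc 1 5).image (fun q : ℕ × ℕ => 2 * n - 3 - q.2 * q.1))
      ({2 * n - 3, 2 * n - 1} : Finset ℕ)
    have h3 := Finset.card_image_le (s := (n - 2).divisors ×ˢ Finset.Icc 1 5)
      (f := fun q : ℕ × ℕ => 2 * n - 3 - q.2 * q.1)
    have h4 : ((n - 2).divisors ×ˢ Finset.Icc 1 5).card = (n - 2).divisors.card * 5 := by
      rw [Finset.card_product, Nat.card_Icc]
    have h5 : (n - 2).divisors.card ≤ 2 * Nat.sqrt (n - 2) := wr_tau _ (by omega)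
    have h6 : Nat.sqrt (n - 2) ≤ Nat.sqrt n := Nat.sqrt_le_sqrt (by omega)
    have h7 : ({2 * n - 3, 2 * n - 1} : Finset ℕ).card ≤ 2 := by
      apply le_trans (Finset.card_insert_le _ _); simp
    omega
  have bound_large : (∏ x ∈ F, x ^ (centralBinom n).factorization x)
      ≤ (2 * n) ^ (10 * Nat.sqrt n + 2) := by
    calc (∏ x ∈ F, x ^ (centralBinom n).factorization x) ≤ ∏ _x ∈ F, 2 * n :=
          Finset.prod_le_prod' fun p _ => pow_factorization_choose_le (by omega)
    _ = (2 * n) ^ F.card := Finset.prod_const _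
    _ ≤ (2 * n) ^ (10 * Nat.sqrt n + 2) := Nat.pow_le_pow_right (by omega) hcardF
  -- Assemble
  have hdecomp : centralBinom n ≤
      (2 * n) ^ Nat.sqrt (2 * n) * 4 ^ (2 * n / 3) * (2 * n) ^ (10 * Nat.sqrt n + 2) := by
    have e1 : centralBinom n = (∏ x ∈ Finset.range (2 * n / 3 + 1),
        x ^ (centralBinom n).factorization x) * (∏ x ∈ Finset.Ico (2 * n / 3 + 1) (2 * n + 1),
        x ^ (centralBinom n).factorization x) := by
      conv_lhs => rw [← Nat.prod_pow_factorization_centralBinom n]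
      rw [Finset.range_eq_Ico, ← Finset.prod_Ico_consecutive _
        (by omega : 0 ≤ 2 * n / 3 + 1) (by omega : 2 * n / 3 + 1 ≤ 2 * n + 1),
        ← Finset.range_eq_Ico]
    rw [e1, hIco]
    exact Nat.mul_le_mul bound_small bound_large
  have H2 : 4 ^ n < n * centralBinom n := Nat.four_pow_lt_mul_centralBinom n (by omega)
  have H1 := wr_main_ineq n h20
  have H3 : n * centralBinom n ≤ 4 ^ n := by
    calc n * centralBinom n
        ≤ n * ((2 * n) ^ Nat.sqrt (2 * n) * 4 ^ (2 * n / 3) * (2 * n) ^ (10 * Nat.sqrt n + 2)) :=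
          Nat.mul_le_mul_left n hdecomp
    _ ≤ 4 ^ n := H1
  omega


set_option maxHeartbeats 1000000 in
/-- For every even integer `k` with `k = 10` or `k ≥ 16`, there exist a prime
`p > k` and an integer `t` such that, with `d = gcd(p − 1, k − 2)` and
`m = (p − 1)/d`, one has `0 < t < m`, `gcd(t, m) = 1`, and both
`d·t + 2 < k` and `p + 1 − d·t < k`. -/
theorem weight_reduction_exists (k : ℕ) (hk : Even k) (hk' : k = 10 ∨ 16 ≤ k) :
    ∃ p t : ℕ, p.Prime ∧ k < p ∧
      (let d := Nat.gcd (p - 1) (k - 2)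
       let m := (p - 1) / d
       0 < t ∧ t < m ∧ Nat.gcd t m = 1 ∧ d * t + 2 < k ∧ p + 1 - d * t < k) := by
  by_cases h10 : k = 10
  · subst h10
    exact ⟨11, 2, by norm_num, by norm_num, by norm_num⟩
  by_cases h26 : k = 26
  · subst h26
    exact ⟨29, 3, by norm_num, by norm_num, by norm_num⟩
  have h16 : 16 ≤ k := by omega
  have hkeven : k % 2 = 0 := Nat.even_iff.mp hk
  have hG : ∃ r, r.Prime ∧ k < r ∧ 6 * Nat.gcd (r - 1) (k - 2) + r ≤ 2 * k - 3 := by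
    rcases le_or_gt 1048576 k with hbig | hsmall
    · exact wr_analytic k hk hbig
    · have hbase : k < 31 → ∃ r, r.Prime ∧ k < r ∧ 6 * Nat.gcd (r - 1) (k - 2) + r ≤ 2 * k - 3 := by
        intro hk31
        have : k = 16 ∨ k = 18 ∨ k = 20 ∨ k = 22 ∨ k = 24 ∨ k = 28 ∨ k = 30 := by omega
        rcases this with h|h|h|h|h|h|h <;> subst h
        · exact ⟨17, by norm_num, by norm_num, by norm_num⟩
        · exact ⟨19, by norm_num, by norm_num, by norm_num⟩
        · exact ⟨23, by norm_num, by norm_num, by norm_num⟩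
        · exact ⟨23, by norm_num, by norm_num, by norm_num⟩
        · exact ⟨29, by norm_num, by norm_num, by norm_num⟩
        · exact ⟨29, by norm_num, by norm_num, by norm_num⟩
        · exact ⟨31, by norm_num, by norm_num, by norm_num⟩
      have h47 : k < 47 → ∃ r, r.Prime ∧ k < r ∧ 6 * Nat.gcd (r - 1) (k - 2) + r ≤ 2 * k - 3 :=
        fun hkp => wr_chain_step k 31 23 47 (by norm_num) (by norm_num) (by norm_num)
          (by norm_num) (by norm_num) hbase hk hkp
      have h59 : k < 59 → ∃ r, r.Prime ∧ k < r ∧ 6 * Nat.gcd (r - 1) (k - 2) + r ≤ 2 * k - 3 :=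
        fun hkp => wr_chain_step k 47 29 59 (by norm_num) (by norm_num) (by norm_num)
          (by norm_num) (by norm_num) h47 hk hkp
      have h83 : k < 83 → ∃ r, r.Prime ∧ k < r ∧ 6 * Nat.gcd (r - 1) (k - 2) + r ≤ 2 * k - 3 :=
        fun hkp => wr_chain_step k 59 41 83 (by norm_num) (by norm_num) (by norm_num)
          (by norm_num) (by norm_num) h59 hk hkp
      have h107 : k < 107 → ∃ r, r.Prime ∧ k < r ∧ 6 * Nat.gcd (r - 1) (k - 2) + r ≤ 2 * k - 3 :=
        fun hkp => wr_chain_step k 83 53 107 (by norm_num) (by norm_num) (by norm_num)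
          (by norm_num) (by norm_num) h83 hk hkp
      have h167 : k < 167 → ∃ r, r.Prime ∧ k < r ∧ 6 * Nat.gcd (r - 1) (k - 2) + r ≤ 2 * k - 3 :=
        fun hkp => wr_chain_step k 107 83 167 (by norm_num) (by norm_num) (by norm_num)
          (by norm_num) (by norm_num) h107 hk hkp
      have h227 : k < 227 → ∃ r, r.Prime ∧ k < r ∧ 6 * Nat.gcd (r - 1) (k - 2) + r ≤ 2 * k - 3 :=
        fun hkp => wr_chain_step k 167 113 227 (by norm_num) (by norm_num) (by norm_num)
          (by norm_num) (by norm_num) h167 hk hkp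
      have h383 : k < 383 → ∃ r, r.Prime ∧ k < r ∧ 6 * Nat.gcd (r - 1) (k - 2) + r ≤ 2 * k - 3 :=
        fun hkp => wr_chain_step k 227 191 383 (by norm_num) (by norm_num) (by norm_num)
          (by norm_num) (by norm_num) h227 hk hkp
      have h719 : k < 719 → ∃ r, r.Prime ∧ k < r ∧ 6 * Nat.gcd (r - 1) (k - 2) + r ≤ 2 * k - 3 :=
        fun hkp => wr_chain_step k 383 359 719 (by norm_num) (by norm_num) (by norm_num)
          (by norm_num) (by norm_num) h383 hk hkp
      have h1187 : k < 1187 → ∃ r, r.Prime ∧ k < r ∧ 6 * Nat.gcd (r - 1) (k - 2) + r ≤ 2 * k - 3 :=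
        fun hkp => wr_chain_step k 719 593 1187 (by norm_num) (by norm_num) (by norm_num)
          (by norm_num) (by norm_num) h719 hk hkp
      have h2207 : k < 2207 → ∃ r, r.Prime ∧ k < r ∧ 6 * Nat.gcd (r - 1) (k - 2) + r ≤ 2 * k - 3 :=
        fun hkp => wr_chain_step k 1187 1103 2207 (by norm_num) (by norm_num) (by norm_num)
          (by norm_num) (by norm_num) h1187 hk hkp
      have h4259 : k < 4259 → ∃ r, r.Prime ∧ k < r ∧ 6 * Nat.gcd (r - 1) (k - 2) + r ≤ 2 * k - 3 :=
        fun hkp => wr_chain_step k 2207 2129 4259 (by norm_num) (by norm_num) (by norm_num)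
          (by norm_num) (by norm_num) h2207 hk hkp
      have h8423 : k < 8423 → ∃ r, r.Prime ∧ k < r ∧ 6 * Nat.gcd (r - 1) (k - 2) + r ≤ 2 * k - 3 :=
        fun hkp => wr_chain_step k 4259 4211 8423 (by norm_num) (by norm_num) (by norm_num)
          (by norm_num) (by norm_num) h4259 hk hkp
      have h16547 : k < 16547 → ∃ r, r.Prime ∧ k < r ∧ 6 * Nat.gcd (r - 1) (k - 2) + r ≤ 2 * k - 3 :=
        fun hkp => wr_chain_step k 8423 8273 16547 (by norm_num) (by norm_num) (by norm_num)
          (by norm_num) (by norm_num) h8423 hk hkp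
      have h32987 : k < 32987 → ∃ r, r.Prime ∧ k < r ∧ 6 * Nat.gcd (r - 1) (k - 2) + r ≤ 2 * k - 3 :=
        fun hkp => wr_chain_step k 16547 16493 32987 (by norm_num) (by norm_num) (by norm_num)
          (by norm_num) (by norm_num) h16547 hk hkp
      have h65867 : k < 65867 → ∃ r, r.Prime ∧ k < r ∧ 6 * Nat.gcd (r - 1) (k - 2) + r ≤ 2 * k - 3 :=
        fun hkp => wr_chain_step k 32987 32933 65867 (by norm_num) (by norm_num) (by norm_num)
          (by norm_num) (by norm_num) h32987 hk hkp
      have h131687 : k < 131687 → ∃ r, r.Prime ∧ k < r ∧ 6 * Nat.gcd (r - 1) (k - 2) + r ≤ 2 * k - 3 :=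
        fun hkp => wr_chain_step k 65867 65843 131687 (by norm_num) (by norm_num) (by norm_num)
          (by norm_num) (by norm_num) h65867 hk hkp
      have h262643 : k < 262643 → ∃ r, r.Prime ∧ k < r ∧ 6 * Nat.gcd (r - 1) (k - 2) + r ≤ 2 * k - 3 :=
        fun hkp => wr_chain_step k 131687 131321 262643 (by norm_num) (by norm_num) (by norm_num)
          (by norm_num) (by norm_num) h131687 hk hkp
      have h524387 : k < 524387 → ∃ r, r.Prime ∧ k < r ∧ 6 * Nat.gcd (r - 1) (k - 2) + r ≤ 2 * k - 3 :=
        fun hkp => wr_chain_step k 262643 262193 524387 (by norm_num) (by norm_num) (by norm_num)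
          (by norm_num) (by norm_num) h262643 hk hkp
      have h1048703 : k < 1048703 → ∃ r, r.Prime ∧ k < r ∧ 6 * Nat.gcd (r - 1) (k - 2) + r ≤ 2 * k - 3 :=
        fun hkp => wr_chain_step k 524387 524351 1048703 (by norm_num) (by norm_num) (by norm_num)
          (by norm_num) (by norm_num) h524387 hk hkp
      exact h1048703 (by omega)
  obtain ⟨p, hp, hkp, h6⟩ := hG
  obtain ⟨t, ht1, ht2, ht3, ht4, ht5⟩ := wr_core k p hk (by omega) hp hkp h6
  exact ⟨p, t, hp, hkp, ht1, ht2, ht3, ht4, ht5⟩
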